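/- Let t ≥ 0 and n ≥ 12t + 54 be integers and let G be a triangle-free simple graph on n vertices with e(G) ≥ n²/4 − n/2 − 6t − 11. Then the maximum degree of G satisfies Δ(G) ≥ n/2 − 2, and G contains an independent set of size at least n/2 − 2 (namely the neighborhood of any vertex of maximum degree). -/

import Mathlib

/-- Let `t ≥ 0`, `n ≥ 12t + 54` and let `G` be a triangle-free graph on `n` vertices with
`e(G) ≥ n²/4 - n/2 - 6t - 11`. Then `Δ(G) ≥ n/2 - 2`, and the neighborhood of any
vertex of maximum degree is an independent set of size at least `n/2 - 2`. -/
theorem max_degree_and_indep_neighborhood (t n : ℕ) (hn : 12 * t + 54 ≤ n)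
    (G : SimpleGraph (Fin n)) [DecidableRel G.Adj] (hfree : G.CliqueFree 3)
    (he : (n : ℝ) ^ 2 / 4 - (n : ℝ) / 2 - 6 * t - 11 ≤ (G.edgeFinset.card : ℝ)) :
    (n : ℝ) / 2 - 2 ≤ (G.maxDegree : ℝ) ∧
    ∀ v : Fin n, G.degree v = G.maxDegree →
      (∀ x ∈ G.neighborFinset v, ∀ y ∈ G.neighborFinset v, x ≠ y → ¬ G.Adj x y) ∧
      (n : ℝ) / 2 - 2 ≤ ((G.neighborFinset v).card : ℝ) := by
  have hn' : (12 * (t : ℝ) + 54 : ℝ) ≤ n := by exact_mod_cast hn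
  have ht : (0:ℝ) ≤ t := Nat.cast_nonneg t
  have hnpos : (0:ℝ) < n := by linarith
  have hsum : ∑ v, G.degree v = 2 * G.edgeFinset.card :=
    G.sum_degrees_eq_twice_card_edges
  have hle : ∑ v : Fin n, G.degree v ≤ n * G.maxDegree := by
    calc ∑ v : Fin n, G.degree v ≤ ∑ _v : Fin n, G.maxDegree :=
          Finset.sum_le_sum (fun v _ => G.degree_le_maxDegree v)
      _ = n * G.maxDegree := by simp [Finset.sum_const, Finset.card_univ, mul_comm]
  have h2e : 2 * G.edgeFinset.card ≤ n * G.maxDegree := hsum ▸ hle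
  have h2e' : (2:ℝ) * G.edgeFinset.card ≤ (n:ℝ) * G.maxDegree := by exact_mod_cast h2e
  have hmax : (n:ℝ)/2 - 2 ≤ G.maxDegree := by
    have key : (n:ℝ) * ((n:ℝ)/2 - 2) ≤ (n:ℝ) * G.maxDegree := by nlinarith
    exact (mul_le_mul_iff_right₀ hnpos).mp key
  refine ⟨hmax, fun v hv => ⟨?_, ?_⟩⟩
  · intro x hx y hy hxy hadj
    rw [SimpleGraph.mem_neighborFinset] at hx hy
    exact hfree {v, x, y} (SimpleGraph.is3Clique_triple_iff.2 ⟨hx, hy, hadj⟩)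
  · have hcard : (G.neighborFinset v).card = G.maxDegree := by
      rw [G.card_neighborFinset_eq_degree, hv]
    rw [hcard]; exact hmax
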